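/- Let h: ℝᵈ → ℂ be a bounded measurable function with support U := supp(h) compact and bounded away from 0, and suppose there exist 0 < c such that |h(ω)| ≥ c for a.e. ω ∈ U. Let b ∈ GL_d(ℝ) be expansive in the sense that |λ| > 1 for all eigenvalues λ of b⁻¹... Assume the family {bʲU}_{j∈ℤ} covers ℝᵈ \ {0} with bounded overlap, i.e. there exist 0 < p ≤ P < ∞ with p ≤ ∑_{j∈ℤ} |h(bʲω)|² ≤ P for a.e. ω ∈ ℝᵈ. If for every j ∈ ℤ and every f ∈ L²(ℝᵈ) supported in b⁻ʲU we have m‖f‖² ≤ ∑_{γ∈X} |⟨f, |det b|^{j/2} e^{-2πi bʲγ·(·)} χ_{b⁻ʲU}⟩|² ≤ M‖f‖², then the system {ω ↦ |det b|^{j/2} e^{-2πi bʲγ·ω} h(bʲω) : j ∈ ℤ, γ ∈ X} is a frame for L²(ℝᵈ) with bounds pm and PM. -/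

import Mathlib

open MeasureTheory Filter
open scoped Classical
open scoped ENNReal NNReal
noncomputable section


open scoped ENNReal NNReal in
lemma sq_eLpNorm_two {α : Type*} [MeasurableSpace α] (μ : MeasureTheory.Measure α) (g : α → ℂ) :
    MeasureTheory.eLpNorm g 2 μ ^ 2 = ∫⁻ a, (‖g a‖₊ : ENNReal) ^ 2 ∂μ := by
  rw [MeasureTheory.eLpNorm_eq_lintegral_rpow_enorm_toReal two_ne_zero ENNReal.ofNat_ne_top,
    ← ENNReal.rpow_natCast _ 2, ← ENNReal.rpow_mul]
  norm_num [enorm_eq_nnnorm]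

/-- The matrix `bʲ` for `j : ℤ` and an invertible matrix `b`. -/
def zmPow {d : ℕ} (b : (Matrix (Fin d) (Fin d) ℝ)ˣ) (j : ℤ) : Matrix (Fin d) (Fin d) ℝ :=
  ((b ^ j : (Matrix (Fin d) (Fin d) ℝ)ˣ) : Matrix (Fin d) (Fin d) ℝ)

/-- The affine system element on the Fourier side:
`ψ_{j,γ}(ω) = |det b|^{j/2} e^{-2πi bʲγ·ω} h(bʲω)`. -/
def frameFn {d : ℕ} (b : (Matrix (Fin d) (Fin d) ℝ)ˣ) (h : (Fin d → ℝ) → ℂ)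
    (j : ℤ) (γ : Fin d → ℝ) (ω : Fin d → ℝ) : ℂ :=
  (|(zmPow b j).det| ^ ((1 : ℝ) / 2) : ℝ) •
    (Complex.exp (-2 * (Real.pi : ℂ) * Complex.I *
        ((∑ i, (zmPow b j).mulVec γ i * ω i : ℝ) : ℂ)) *
      h ((zmPow b j).mulVec ω))

/-- Theorem (frame construction): if `h` is bounded, measurable, supported in a compact set `U`
bounded away from `0`, `|h| ≥ c > 0` a.e. on `U`, `p ≤ ∑_j |h(bʲω)|² ≤ P` a.e., `b⁻¹` is
expansive, and for every `j` the exponentials over `X` form a frame with bounds `m, M` on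
functions supported in `b⁻ʲU`, then `{|det b|^{j/2} e^{-2πi bʲγ·ω} h(bʲω)}_{j∈ℤ, γ∈X}` is a
frame of `L²(ℝᵈ)` with bounds `pm` and `PM`. -/
theorem frame_of_affine_system {d : ℕ} (b : (Matrix (Fin d) (Fin d) ℝ)ˣ)
    (hexpansive : ∀ z ∈ spectrum ℂ
      ((zmPow b (-1)).map (algebraMap ℝ ℂ)), 1 < ‖z‖)
    (h : (Fin d → ℝ) → ℂ) (hmeas : Measurable h)
    (C : ℝ) (hbd : ∀ ω, ‖h ω‖ ≤ C)
    (U : Set (Fin d → ℝ)) (hUsupp : U = Function.support h)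
    (hUcompact : IsCompact (closure U)) (hU0 : (0 : Fin d → ℝ) ∉ closure U)
    (c : ℝ) (hc : 0 < c) (hlow : ∀ᵐ ω ∂(volume : Measure (Fin d → ℝ)), ω ∈ U → c ≤ ‖h ω‖)
    (p P : ℝ) (hp : 0 < p) (hpP : p ≤ P)
    (hcover : ∀ᵐ ω ∂(volume : Measure (Fin d → ℝ)),
      p ≤ (∑' j : ℤ, ‖h ((zmPow b j).mulVec ω)‖ ^ 2) ∧
        (∑' j : ℤ, ‖h ((zmPow b j).mulVec ω)‖ ^ 2) ≤ P)
    (X : Set (Fin d → ℝ)) (hX : X.Countable)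
    (hXsep : ∃ δ : ℝ, 0 < δ ∧ ∀ γ γ' : X, γ ≠ γ' → δ ≤ ‖(γ : Fin d → ℝ) - γ'‖)
    (m M : ℝ) (hm : 0 < m) (hmM : m ≤ M)
    (hframe : ∀ j : ℤ, ∀ f : (Fin d → ℝ) → ℂ,
      MemLp f 2 (volume : Measure (Fin d → ℝ)) →
      (∀ ω, (zmPow b j).mulVec ω ∉ U → f ω = 0) →
      (m * ((eLpNorm f 2 (volume : Measure (Fin d → ℝ))).toReal) ^ 2 ≤
        ∑' γ : X, ‖∫ ω : Fin d → ℝ, f ω * (starRingEnd ℂ)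
          ((|(zmPow b j).det| ^ ((1 : ℝ) / 2) : ℝ) •
            (Complex.exp (-2 * (Real.pi : ℂ) * Complex.I *
                ((∑ i, (zmPow b j).mulVec (γ : Fin d → ℝ) i * ω i : ℝ) : ℂ)) *
              (if (zmPow b j).mulVec ω ∈ U then 1 else 0)))‖ ^ 2) ∧
      (∑' γ : X, ‖∫ ω : Fin d → ℝ, f ω * (starRingEnd ℂ)
          ((|(zmPow b j).det| ^ ((1 : ℝ) / 2) : ℝ) •
            (Complex.exp (-2 * (Real.pi : ℂ) * Complex.I *
                ((∑ i, (zmPow b j).mulVec (γ : Fin d → ℝ) i * ω i : ℝ) : ℂ)) *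
              (if (zmPow b j).mulVec ω ∈ U then 1 else 0)))‖ ^ 2) ≤
        M * ((eLpNorm f 2 (volume : Measure (Fin d → ℝ))).toReal) ^ 2) :
    ∀ f : (Fin d → ℝ) → ℂ, MemLp f 2 (volume : Measure (Fin d → ℝ)) →
      (p * m * ((eLpNorm f 2 (volume : Measure (Fin d → ℝ))).toReal) ^ 2 ≤
        ∑' j : ℤ, ∑' γ : X,
          ‖∫ ω : Fin d → ℝ, f ω * (starRingEnd ℂ) (frameFn b h j γ ω)‖ ^ 2) ∧
      ((∑' j : ℤ, ∑' γ : X,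
          ‖∫ ω : Fin d → ℝ, f ω * (starRingEnd ℂ) (frameFn b h j γ ω)‖ ^ 2) ≤
        P * M * ((eLpNorm f 2 (volume : Measure (Fin d → ℝ))).toReal) ^ 2) := by
  intro f hf
  have hC0 : (0:ℝ) ≤ C := le_trans (norm_nonneg _) (hbd 0)
  have hP0 : (0:ℝ) ≤ P := le_trans hp.le hpP
  have hmv : ∀ j : ℤ, Measurable fun ω : Fin d → ℝ => (zmPow b j).mulVec ω := by
    intro j
    refine measurable_pi_iff.mpr fun i => ?_
    simp only [Matrix.mulVec, dotProduct]
    exact Finset.measurable_sum _ fun k _ => (measurable_pi_apply k).const_mul _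
  set F : ℤ → (Fin d → ℝ) → ℂ :=
    fun j ω => f ω * (starRingEnd ℂ) (h ((zmPow b j).mulVec ω)) with hFdef
  have hFaesm : ∀ j, AEStronglyMeasurable (F j) (volume : Measure (Fin d → ℝ)) := fun j =>
    hf.aestronglyMeasurable.mul
      ((Complex.continuous_conj.measurable.comp (hmeas.comp (hmv j))).aestronglyMeasurable)
  have hFmem : ∀ j, MemLp (F j) 2 (volume : Measure (Fin d → ℝ)) := by
    intro j
    refine MemLp.of_le_mul (c := C) hf (hFaesm j) (Filter.Eventually.of_forall fun ω => ?_)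
    simp only [hFdef, norm_mul, RCLike.norm_conj]
    rw [mul_comm]
    exact mul_le_mul_of_nonneg_right (hbd _) (norm_nonneg _)
  have hFsupp : ∀ j, ∀ ω, (zmPow b j).mulVec ω ∉ U → F j ω = 0 := by
    intro j ω hω
    have h0 : h ((zmPow b j).mulVec ω) = 0 := by
      rw [hUsupp] at hω; exact Function.notMem_support.mp hω
    simp [hFdef, h0]
  have hint : ∀ (j : ℤ) (γ : X),
      (∫ ω : Fin d → ℝ, F j ω * (starRingEnd ℂ)
        ((|(zmPow b j).det| ^ ((1 : ℝ) / 2) : ℝ) •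
          (Complex.exp (-2 * (Real.pi : ℂ) * Complex.I *
              ((∑ i, (zmPow b j).mulVec (γ : Fin d → ℝ) i * ω i : ℝ) : ℂ)) *
            (if (zmPow b j).mulVec ω ∈ U then 1 else 0)))) =
      ∫ ω : Fin d → ℝ, f ω * (starRingEnd ℂ) (frameFn b h j (γ : Fin d → ℝ) ω) := by
    intro j γ
    refine integral_congr_ae (Filter.Eventually.of_forall fun ω => ?_)
    by_cases hmem : (zmPow b j).mulVec ω ∈ U
    · simp only [hFdef, frameFn, if_pos hmem, mul_one, Complex.real_smul, map_mul,
        Complex.conj_ofReal]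
      ring
    · have h0 : h ((zmPow b j).mulVec ω) = 0 := by
        rw [hUsupp] at hmem; exact Function.notMem_support.mp hmem
      simp [hFdef, frameFn, if_neg hmem, h0]
  set T : ℤ → ℝ := fun j => ((eLpNorm (F j) 2 (volume : Measure (Fin d → ℝ))).toReal) ^ 2
    with hTdef
  set S : ℤ → ℝ := fun j => ∑' γ : X,
      ‖∫ ω : Fin d → ℝ, f ω * (starRingEnd ℂ) (frameFn b h j (γ : Fin d → ℝ) ω)‖ ^ 2 with hSdef
  have hS : ∀ j, m * T j ≤ S j ∧ S j ≤ M * T j := by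
    intro j
    have hfr := hframe j (F j) (hFmem j) (hFsupp j)
    have heq : (∑' γ : X, ‖∫ ω : Fin d → ℝ, F j ω * (starRingEnd ℂ)
        ((|(zmPow b j).det| ^ ((1 : ℝ) / 2) : ℝ) •
          (Complex.exp (-2 * (Real.pi : ℂ) * Complex.I *
              ((∑ i, (zmPow b j).mulVec (γ : Fin d → ℝ) i * ω i : ℝ) : ℂ)) *
            (if (zmPow b j).mulVec ω ∈ U then 1 else 0)))‖ ^ 2) = S j :=
      tsum_congr fun γ => by rw [hint j γ]
    exact ⟨heq ▸ hfr.1, heq ▸ hfr.2⟩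
  set E : ℤ → ℝ≥0∞ := fun j => ∫⁻ ω, (‖F j ω‖₊ : ℝ≥0∞) ^ 2 with hEdef
  have hE_eq : ∀ j, E j = eLpNorm (F j) 2 (volume : Measure (Fin d → ℝ)) ^ 2 :=
    fun j => (sq_eLpNorm_two _ _).symm
  have hE_ne : ∀ j, E j ≠ ⊤ := by
    intro j; rw [hE_eq]
    exact ENNReal.pow_ne_top (hFmem j).2.ne
  have hT_toReal : ∀ j, T j = (E j).toReal := by
    intro j; rw [hE_eq, ENNReal.toReal_pow]
  set K : ℝ := ((eLpNorm f 2 (volume : Measure (Fin d → ℝ))).toReal) ^ 2 with hKdef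
  have hK0 : (0:ℝ) ≤ K := sq_nonneg _
  have hfint : (∫⁻ ω, (‖f ω‖₊ : ℝ≥0∞) ^ 2) = ENNReal.ofReal K := by
    rw [hKdef, ← ENNReal.toReal_pow,
      ENNReal.ofReal_toReal (ENNReal.pow_ne_top hf.2.ne), sq_eLpNorm_two]
  have hEsum_eq : (∑' j : ℤ, E j) = ∫⁻ ω, ∑' j : ℤ, (‖F j ω‖₊ : ℝ≥0∞) ^ 2 :=
    (lintegral_tsum fun j => ((hFaesm j).enorm.pow_const 2)).symm
  have hae : ∀ᵐ ω ∂(volume : Measure (Fin d → ℝ)),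
      ENNReal.ofReal p * (‖f ω‖₊ : ℝ≥0∞) ^ 2 ≤ (∑' j : ℤ, (‖F j ω‖₊ : ℝ≥0∞) ^ 2) ∧
      (∑' j : ℤ, (‖F j ω‖₊ : ℝ≥0∞) ^ 2) ≤ ENNReal.ofReal P * (‖f ω‖₊ : ℝ≥0∞) ^ 2 := by
    filter_upwards [hcover] with ω hω
    have hnn : ∀ j : ℤ, 0 ≤ ‖h ((zmPow b j).mulVec ω)‖ ^ 2 := fun j => sq_nonneg _
    have hsummable : Summable fun j : ℤ => ‖h ((zmPow b j).mulVec ω)‖ ^ 2 := by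
      by_contra hns
      rw [tsum_eq_zero_of_not_summable hns] at hω
      exact absurd hω.1 (not_le.mpr hp)
    have hkey : (∑' j : ℤ, (‖F j ω‖₊ : ℝ≥0∞) ^ 2)
        = ENNReal.ofReal (∑' j : ℤ, ‖h ((zmPow b j).mulVec ω)‖ ^ 2)
            * (‖f ω‖₊ : ℝ≥0∞) ^ 2 := by
      rw [ENNReal.ofReal_tsum_of_nonneg hnn hsummable, ← ENNReal.tsum_mul_right]
      refine tsum_congr fun j => ?_
      have hn : ‖F j ω‖₊ = ‖f ω‖₊ * ‖h ((zmPow b j).mulVec ω)‖₊ := by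
        simp only [hFdef]
        rw [nnnorm_mul, RCLike.nnnorm_conj]
      rw [hn, ENNReal.ofReal_pow (norm_nonneg _), ofReal_norm, enorm_eq_nnnorm]
      push_cast
      ring
    constructor
    · rw [hkey]
      exact mul_le_mul' (ENNReal.ofReal_le_ofReal hω.1) le_rfl
    · rw [hkey]
      exact mul_le_mul' (ENNReal.ofReal_le_ofReal hω.2) le_rfl
  have hupper : (∑' j : ℤ, E j) ≤ ENNReal.ofReal P * ENNReal.ofReal K := by
    rw [hEsum_eq, ← hfint, ← lintegral_const_mul' _ _ ENNReal.ofReal_ne_top]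
    exact lintegral_mono_ae (hae.mono fun ω hω => hω.2)
  have hlower : ENNReal.ofReal p * ENNReal.ofReal K ≤ ∑' j : ℤ, E j := by
    rw [hEsum_eq, ← hfint, ← lintegral_const_mul' _ _ ENNReal.ofReal_ne_top]
    exact lintegral_mono_ae (hae.mono fun ω hω => hω.1)
  have hEsum_ne : (∑' j : ℤ, E j) ≠ ⊤ :=
    ne_top_of_le_ne_top (ENNReal.mul_ne_top ENNReal.ofReal_ne_top ENNReal.ofReal_ne_top) hupper
  have hTsum_eq : (∑' j : ℤ, T j) = (∑' j : ℤ, E j).toReal := by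
    calc (∑' j : ℤ, T j) = ∑' j : ℤ, (E j).toReal := tsum_congr hT_toReal
      _ = (∑' j : ℤ, E j).toReal := (ENNReal.tsum_toReal_eq hE_ne).symm
  have hTsummable : Summable T :=
    (ENNReal.summable_toReal hEsum_ne).congr fun j => (hT_toReal j).symm
  have hTsum_le : (∑' j : ℤ, T j) ≤ P * K := by
    rw [hTsum_eq]
    have := ENNReal.toReal_mono
      (ENNReal.mul_ne_top ENNReal.ofReal_ne_top ENNReal.ofReal_ne_top) hupper
    rwa [ENNReal.toReal_mul, ENNReal.toReal_ofReal hP0, ENNReal.toReal_ofReal hK0] at this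
  have hTsum_ge : p * K ≤ ∑' j : ℤ, T j := by
    rw [hTsum_eq]
    have := ENNReal.toReal_mono hEsum_ne hlower
    rwa [ENNReal.toReal_mul, ENNReal.toReal_ofReal hp.le, ENNReal.toReal_ofReal hK0] at this
  have hSnonneg : ∀ j, 0 ≤ S j := fun j => tsum_nonneg fun γ => sq_nonneg _
  have hMT_summable : Summable fun j => M * T j := hTsummable.mul_left M
  have hSsummable : Summable S :=
    Summable.of_nonneg_of_le hSnonneg (fun j => (hS j).2) hMT_summable
  constructor
  · calc p * m * K = m * (p * K) := by ring
      _ ≤ m * ∑' j : ℤ, T j := mul_le_mul_of_nonneg_left hTsum_ge hm.le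
      _ = ∑' j : ℤ, m * T j := tsum_mul_left.symm
      _ ≤ ∑' j : ℤ, S j := Summable.tsum_le_tsum (fun j => (hS j).1) (hTsummable.mul_left m) hSsummable
  · calc (∑' j : ℤ, S j) ≤ ∑' j : ℤ, M * T j :=
        Summable.tsum_le_tsum (fun j => (hS j).2) hSsummable hMT_summable
      _ = M * ∑' j : ℤ, T j := tsum_mul_left
      _ ≤ M * (P * K) := mul_le_mul_of_nonneg_left hTsum_le (hm.trans_le hmM).le
      _ = P * M * K := by ring
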